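/- Suppose the MDP is transient and the iterates w^{t,*} (defined by w^{0,*} = −1 and w^{t+1,*} = L* w^{t,*}) are bounded below, i.e. there is M ∈ ℝ with (w^{t,*})_s ≥ M for all t, s, and let w^{∞,*} := lim_{t→∞} w^{t,*}. Then value iteration with the optimistic initialization w^0 = 0 (the zero vector) also converges to the optimal exponential value function: the iterates u^0 = 0, u^{t+1} = L* u^t satisfy lim_{t→∞} u^t = w^{∞,*}. -/

import Mathlib

open Matrix Filter

/-- Spectral radius of a real square matrix: the maximum modulus of its complex eigenvalues. -/
noncomputable def specRad {S : Type*} [Fintype S] [DecidableEq S] (M : Matrix S S ℝ) : ℝ :=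
  sSup ((fun z : ℂ => ‖z‖) '' spectrum ℂ (M.map Complex.ofReal))

/-- Exponential transition matrix `B^a` for action `a`. -/
noncomputable def Bmat {S A : Type*} (p r : S → A → Option S → ℝ) (β : ℝ) (a : A) :
    Matrix S S ℝ :=
  Matrix.of fun s s' => p s a (some s') * Real.exp (-β * r s a (some s'))

/-- Exponential termination vector `b^a` for action `a` (`none` is the sink state `e`). -/
noncomputable def bvec {S A : Type*} (p r : S → A → Option S → ℝ) (β : ℝ) (a : A) : S → ℝ :=
  fun s => p s a none * Real.exp (-β * r s a none)

/-- Optimal exponential Bellman operator `L*`. -/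
noncomputable def Lstar {S A : Type*} [Fintype S] [Fintype A] [Nonempty A]
    (p r : S → A → Option S → ℝ) (β : ℝ) (w : S → ℝ) : S → ℝ :=
  fun s => Finset.univ.sup' Finset.univ_nonempty
    (fun a : A => (Bmat p r β a *ᵥ w) s - bvec p r β a s)

/-- Transition matrix `P^d` (restricted to non-sink states) of a deterministic decision rule. -/
def Pmat {S A : Type*} (p : S → A → Option S → ℝ) (d : S → A) : Matrix S S ℝ :=
  Matrix.of fun s s' => p s (d s) (some s')

/-! ### Auxiliary lemmas -/

open scoped Topology

attribute [local instance] Matrix.linftyOpNormedRing Matrix.linftyOpNormedAlgebra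

set_option maxHeartbeats 1000000 in
lemma pow_entry_tendsto {S : Type*} [Fintype S] [DecidableEq S] [Nonempty S]
    (P : Matrix S S ℝ) (hP : specRad P < 1) (s j : S) :
    Tendsto (fun n => (P ^ n) s j) atTop (𝓝 0) := by
  set Pc : Matrix S S ℂ := P.map Complex.ofReal with hPc
  have hmap : ∀ n : ℕ, Pc ^ n = (P ^ n).map Complex.ofReal := by
    intro n
    have := map_pow (Complex.ofRealHom.mapMatrix (m := S)) P n
    simp only [RingHom.mapMatrix_apply] at this
    rw [hPc]; exact this.symm
  have hcompact : IsCompact (spectrum ℂ Pc) := spectrum.isCompact Pc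
  have hbdd : BddAbove ((fun z : ℂ => ‖z‖) '' spectrum ℂ Pc) :=
    (hcompact.image continuous_norm).bddAbove
  have habs : ∀ z ∈ spectrum ℂ Pc, ‖z‖ ≤ specRad P := by
    intro z hz
    exact le_csSup hbdd ⟨z, hz, rfl⟩
  have hρ0 : 0 ≤ specRad P := by
    obtain ⟨z, hz⟩ := spectrum.nonempty Pc
    exact le_trans (norm_nonneg z) (habs z hz)
  set ρ : ℝ := (specRad P + 1) / 2 with hρ
  have hρpos : 0 < ρ := by positivity
  have hρlt1 : ρ < 1 := by simp only [hρ]; linarith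
  have hltρ : specRad P < ρ := by simp only [hρ]; linarith
  set r : NNReal := ρ.toNNReal with hr
  have hrcoe : (r : ℝ) = ρ := Real.coe_toNNReal _ hρpos.le
  have hr1 : r < 1 := by
    rw [← NNReal.coe_lt_coe, hrcoe]; exact hρlt1
  have hsp : spectralRadius ℂ Pc < (r : ENNReal) := by
    apply spectrum.spectralRadius_lt_of_forall_lt
    intro z hz
    rw [← NNReal.coe_lt_coe, coe_nnnorm, hrcoe]
    exact lt_of_le_of_lt (habs z hz) hltρ
  have hgel := spectrum.pow_nnnorm_pow_one_div_tendsto_nhds_spectralRadius Pc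
  have hev : ∀ᶠ n : ℕ in atTop, ((‖Pc ^ n‖₊ : ENNReal) ^ (1 / (n : ℝ))) < (r : ENNReal) :=
    hgel.eventually_lt_const hsp
  have hev2 : ∀ᶠ n : ℕ in atTop, ‖Pc ^ n‖ ≤ (r : ℝ) ^ n := by
    filter_upwards [hev, eventually_ge_atTop 1] with n hn hn1
    have hne : (n : ℝ) ≠ 0 := by positivity
    have hle : ((‖Pc ^ n‖₊ : ENNReal) ^ (1 / (n : ℝ))) ^ (n : ℝ) ≤ (r : ENNReal) ^ (n : ℝ) :=
      ENNReal.rpow_le_rpow hn.le (by positivity)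
    rw [← ENNReal.rpow_mul, one_div, inv_mul_cancel₀ hne, ENNReal.rpow_one,
      ENNReal.rpow_natCast, ← ENNReal.coe_pow, ENNReal.coe_le_coe] at hle
    calc ‖Pc ^ n‖ = ((‖Pc ^ n‖₊ : NNReal) : ℝ) := by rw [coe_nnnorm]
    _ ≤ ((r ^ n : NNReal) : ℝ) := NNReal.coe_le_coe.mpr hle
    _ = (r : ℝ) ^ n := by push_cast; ring
  have hentry : ∀ (M : Matrix S S ℂ) (i j : S), ‖M i j‖ ≤ ‖M‖ := by
    intro M i j
    rw [Matrix.linfty_opNorm_def]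
    have h1 : ‖M i j‖₊ ≤ ∑ j', ‖M i j'‖₊ :=
      Finset.single_le_sum (f := fun j' => ‖M i j'‖₊) (fun _ _ => zero_le) (Finset.mem_univ j)
    have h2 : (∑ j', ‖M i j'‖₊) ≤ Finset.univ.sup fun i => ∑ j', ‖M i j'‖₊ :=
      Finset.le_sup (f := fun i => ∑ j', ‖M i j'‖₊) (Finset.mem_univ i)
    calc ‖M i j‖ = ((‖M i j‖₊ : NNReal) : ℝ) := by rw [coe_nnnorm]
    _ ≤ _ := NNReal.coe_le_coe.mpr (h1.trans h2)
  apply squeeze_zero_norm' (a := fun n => (r : ℝ) ^ n)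
  · filter_upwards [hev2] with n hn
    have h := (hentry (Pc ^ n) s j).trans hn
    rw [hmap n] at h
    simpa [Matrix.map_apply, Complex.norm_real] using h
  · exact tendsto_pow_atTop_nhds_zero_of_lt_one r.coe_nonneg hr1

lemma no_escape_zero {S : Type*} [Fintype S] [DecidableEq S] [Nonempty S]
    (P : Matrix S S ℝ) (hP : specRad P < 1) (hnn : ∀ i j, 0 ≤ P i j)
    (x : S → ℝ) (hx : ∀ s, 0 ≤ x s) (hle : ∀ s, x s ≤ (P *ᵥ x) s) : ∀ s, x s = 0 := by
  have hmono : ∀ (y z : S → ℝ), (∀ s, y s ≤ z s) → ∀ s, (P *ᵥ y) s ≤ (P *ᵥ z) s := by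
    intro y z h s
    simp only [Matrix.mulVec, dotProduct]
    exact Finset.sum_le_sum fun j _ => mul_le_mul_of_nonneg_left (h j) (hnn s j)
  have hiter : ∀ n : ℕ, ∀ s, x s ≤ ((P ^ n) *ᵥ x) s := by
    intro n
    induction n with
    | zero => intro s; simp [Matrix.one_mulVec]
    | succ n ih =>
      intro s
      have h2 : (P *ᵥ x) s ≤ (P *ᵥ ((P ^ n) *ᵥ x)) s := hmono _ _ ih s
      have h3 : P *ᵥ ((P ^ n) *ᵥ x) = (P ^ (n + 1)) *ᵥ x := by
        rw [Matrix.mulVec_mulVec, ← pow_succ']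
      exact le_trans (hle s) (h3 ▸ h2)
  intro s
  have hten : Tendsto (fun n => ((P ^ n) *ᵥ x) s) atTop (𝓝 0) := by
    have h := tendsto_finset_sum (Finset.univ : Finset S)
      (fun j _ => (pow_entry_tendsto P hP s j).mul_const (x j))
    simpa [Matrix.mulVec, dotProduct] using h
  have hle0 : x s ≤ 0 := ge_of_tendsto hten (Eventually.of_forall fun n => hiter n s)
  exact le_antisymm hle0 (hx s)

lemma closed_contra {S A : Type*} [Fintype S] [DecidableEq S] [Nonempty S]
    (p : S → A → Option S → ℝ)
    (hp_nonneg : ∀ s a s', 0 ≤ p s a s')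
    (hp_sum : ∀ s a, ∑ s' : Option S, p s a s' = 1)
    (d : S → A) (hspec : specRad (Pmat p d) < 1)
    (Z : Set S) (hne : Z.Nonempty)
    (hsink : ∀ s ∈ Z, p s (d s) none = 0)
    (hclosed : ∀ s ∈ Z, ∀ s', s' ∉ Z → p s (d s) (some s') = 0) : False := by
  classical
  set x : S → ℝ := fun s => if s ∈ Z then 1 else 0 with hxdef
  have hx0 : ∀ s, 0 ≤ x s := by
    intro s; by_cases h : s ∈ Z <;> simp [hxdef, h]
  have hnn : ∀ i j, 0 ≤ Pmat p d i j := fun i j => hp_nonneg _ _ _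
  have hle : ∀ s, x s ≤ (Pmat p d *ᵥ x) s := by
    intro s
    have hsum : (Pmat p d *ᵥ x) s = ∑ s', p s (d s) (some s') * x s' := by
      simp [Matrix.mulVec, dotProduct, Pmat]
    by_cases hs : s ∈ Z
    · have heq : ∀ s', p s (d s) (some s') * x s' = p s (d s) (some s') := by
        intro s'
        by_cases h' : s' ∈ Z
        · simp [hxdef, h']
        · simp [hxdef, h', hclosed s hs s' h']
      have h1 : ∑ s' : Option S, p s (d s) s' = 1 := hp_sum s (d s)
      rw [Fintype.sum_option, hsink s hs, zero_add] at h1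
      have : (Pmat p d *ᵥ x) s = 1 := by
        rw [hsum, Finset.sum_congr rfl fun s' _ => heq s', h1]
      rw [this]
      simp [hxdef, hs]
    · have : 0 ≤ (Pmat p d *ᵥ x) s := by
        rw [hsum]
        exact Finset.sum_nonneg fun s' _ => mul_nonneg (hp_nonneg _ _ _) (hx0 s')
      simpa [hxdef, hs] using this
  obtain ⟨s0, hs0⟩ := hne
  have := no_escape_zero (Pmat p d) hspec hnn x hx0 hle s0
  simp [hxdef, hs0] at this

section Bellman

variable {S A : Type*} [Fintype S] [DecidableEq S] [Nonempty S] [Fintype A] [Nonempty A]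
  (p r : S → A → Option S → ℝ) (β : ℝ)

lemma Bmat_nonneg (hp : ∀ s a s', 0 ≤ p s a s') (a : A) (s s' : S) :
    0 ≤ Bmat p r β a s s' :=
  mul_nonneg (hp _ _ _) (Real.exp_pos _).le

lemma bvec_nonneg (hp : ∀ s a s', 0 ≤ p s a s') (a : A) (s : S) :
    0 ≤ bvec p r β a s :=
  mul_nonneg (hp _ _ _) (Real.exp_pos _).le

lemma Bmat_mulVec_mono (hp : ∀ s a s', 0 ≤ p s a s') (a : A) {x y : S → ℝ}
    (h : ∀ s, x s ≤ y s) (s : S) : (Bmat p r β a *ᵥ x) s ≤ (Bmat p r β a *ᵥ y) s := by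
  simp only [Matrix.mulVec, dotProduct]
  exact Finset.sum_le_sum fun j _ =>
    mul_le_mul_of_nonneg_left (h j) (Bmat_nonneg p r β hp a s j)

lemma Lstar_mono (hp : ∀ s a s', 0 ≤ p s a s') {x y : S → ℝ}
    (h : ∀ s, x s ≤ y s) (s : S) : Lstar p r β x s ≤ Lstar p r β y s := by
  apply Finset.sup'_le
  intro a _
  refine le_trans ?_ (Finset.le_sup' (fun a : A => (Bmat p r β a *ᵥ y) s - bvec p r β a s)
    (Finset.mem_univ a))
  exact sub_le_sub_right (Bmat_mulVec_mono p r β hp a h s) _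

lemma Lstar_continuous : Continuous (Lstar p r β) := by
  apply continuous_pi
  intro s
  apply Continuous.finset_sup'_apply
  intro a _
  apply Continuous.sub ?_ continuous_const
  simp only [Matrix.mulVec, dotProduct]
  exact continuous_finset_sum _ fun j _ => continuous_const.mul (continuous_apply j)

lemma Lstar_le_action (x : S → ℝ) (a : A) (s : S) :
    (Bmat p r β a *ᵥ x) s - bvec p r β a s ≤ Lstar p r β x s :=
  Finset.le_sup' (fun a : A => (Bmat p r β a *ᵥ x) s - bvec p r β a s) (Finset.mem_univ a)

lemma Lstar_exists_action (x : S → ℝ) (s : S) :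
    ∃ a : A, Lstar p r β x s = (Bmat p r β a *ᵥ x) s - bvec p r β a s := by
  obtain ⟨a, _, ha⟩ := Finset.exists_mem_eq_sup' (Finset.univ_nonempty (α := A))
    (fun a : A => (Bmat p r β a *ᵥ x) s - bvec p r β a s)
  exact ⟨a, ha⟩

end Bellman

theorem stmt19
    {S A : Type*} [Fintype S] [DecidableEq S] [Nonempty S] [Fintype A] [Nonempty A]
    (p r : S → A → Option S → ℝ) (β : ℝ) (hβ : 0 < β)
    (hp_nonneg : ∀ s a s', 0 ≤ p s a s')
    (hp_sum : ∀ s a, ∑ s' : Option S, p s a s' = 1)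
    (htransient : ∀ d : S → A, specRad (Pmat p d) < 1)
    (w : ℕ → S → ℝ)
    (hw0 : w 0 = fun _ => -1)
    (hwsucc : ∀ t, w (t + 1) = Lstar p r β (w t))
    (M : ℝ) (hM : ∀ t s, M ≤ w t s)
    (winf : S → ℝ)
    (hwinf : Filter.Tendsto w Filter.atTop (nhds winf))
    (u : ℕ → S → ℝ)
    (hu0 : u 0 = fun _ => 0)
    (husucc : ∀ t, u (t + 1) = Lstar p r β (u t)) :
    Filter.Tendsto u Filter.atTop (nhds winf) := by
  classical
  -- w t ≤ u t
  have hwu : ∀ t s, w t s ≤ u t s := by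
    intro t
    induction t with
    | zero => intro s; rw [hw0, hu0]; norm_num
    | succ t ih =>
      intro s
      rw [hwsucc, husucc]
      exact Lstar_mono p r β hp_nonneg ih s
  -- u is antitone
  have hdec : ∀ t s, u (t + 1) s ≤ u t s := by
    intro t
    induction t with
    | zero =>
      intro s
      rw [husucc, hu0]
      refine Finset.sup'_le _ _ fun a _ => ?_
      show (Bmat p r β a *ᵥ fun _ => (0:ℝ)) s - bvec p r β a s ≤ (0:ℝ)
      have h1 : (Bmat p r β a *ᵥ fun _ => (0:ℝ)) s = 0 := by
        simp [Matrix.mulVec, dotProduct]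
      rw [h1, zero_sub, neg_nonpos]
      exact bvec_nonneg p r β hp_nonneg a s
    | succ t ih =>
      intro s
      rw [husucc (t + 1)]
      conv_rhs => rw [husucc t]
      exact Lstar_mono p r β hp_nonneg ih s
  have hanti : ∀ s, Antitone fun t => u t s := fun s =>
    antitone_nat_of_succ_le fun t => hdec t s
  -- u t bounded below
  have hMu : ∀ t s, M ≤ u t s := fun t s => (hM t s).trans (hwu t s)
  -- limit of u
  set uinf : S → ℝ := fun s => ⨅ t, u t s with huinf_def
  have hulim : ∀ s, Tendsto (fun t => u t s) atTop (𝓝 (uinf s)) := by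
    intro s
    exact tendsto_atTop_ciInf (hanti s) ⟨M, fun y ⟨t, ht⟩ => ht ▸ hMu t s⟩
  have hulim' : Tendsto u atTop (𝓝 uinf) := tendsto_pi_nhds.mpr hulim
  -- coordinatewise limits of w
  have hwlim : ∀ s, Tendsto (fun t => w t s) atTop (𝓝 (winf s)) := tendsto_pi_nhds.mp hwinf
  -- fixed point equations
  have hfixw : Lstar p r β winf = winf := by
    have h1 : Tendsto (fun t => w (t + 1)) atTop (𝓝 winf) :=
      hwinf.comp (tendsto_add_atTop_nat 1)
    have h2 : Tendsto (fun t => Lstar p r β (w t)) atTop (𝓝 (Lstar p r β winf)) :=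
      ((Lstar_continuous p r β).tendsto winf).comp hwinf
    have h3 : (fun t => Lstar p r β (w t)) = fun t => w (t + 1) :=
      funext fun t => (hwsucc t).symm
    rw [h3] at h2
    exact tendsto_nhds_unique h2 h1
  have hfixu : Lstar p r β uinf = uinf := by
    have h1 : Tendsto (fun t => u (t + 1)) atTop (𝓝 uinf) :=
      hulim'.comp (tendsto_add_atTop_nat 1)
    have h2 : Tendsto (fun t => Lstar p r β (u t)) atTop (𝓝 (Lstar p r β uinf)) :=
      ((Lstar_continuous p r β).tendsto uinf).comp hulim'
    have h3 : (fun t => Lstar p r β (u t)) = fun t => u (t + 1) :=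
      funext fun t => (husucc t).symm
    rw [h3] at h2
    exact tendsto_nhds_unique h2 h1
  -- winf ≤ uinf ≤ 0
  have hwleu : ∀ s, winf s ≤ uinf s := fun s =>
    le_of_tendsto_of_tendsto' (hwlim s) (hulim s) fun t => hwu t s
  have hule0 : ∀ s, uinf s ≤ 0 := by
    intro s
    have : ∀ t, u t s ≤ 0 := by
      intro t
      simpa [hu0] using hanti s (Nat.zero_le t)
    exact le_of_tendsto (hulim s) (Eventually.of_forall this)
  -- choose maximizing actions for uinf
  choose d hd using fun s => Lstar_exists_action p r β uinf s
  have hfix_d : ∀ s, uinf s = (Bmat p r β (d s) *ᵥ uinf) s - bvec p r β (d s) s := by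
    intro s
    conv_lhs => rw [← hfixu]
    exact hd s
  -- expand mulVec
  have hmv : ∀ (a : A) (x : S → ℝ) (s : S),
      (Bmat p r β a *ᵥ x) s = ∑ j, p s a (some j) * Real.exp (-β * r s a (some j)) * x j := by
    intro a x s
    simp [Matrix.mulVec, dotProduct, Bmat]
  -- Step 1 : uinf < 0 everywhere
  have hneg : ∀ s, uinf s < 0 := by
    intro s
    rcases lt_or_eq_of_le (hule0 s) with h | h
    · exact h
    · exfalso
      set Z : Set S := {s | uinf s = 0} with hZdef
      have hZs : s ∈ Z := h
      apply closed_contra p hp_nonneg hp_sum d (htransient d) Z ⟨s, hZs⟩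
      · -- hsink
        intro s' hs'
        have hkey : bvec p r β (d s') s' +
            ∑ j, p s' (d s') (some j) * Real.exp (-β * r s' (d s') (some j)) * (-uinf j) = 0 := by
          have h1 := hfix_d s'
          rw [hs', hmv] at h1
          have : ∑ j, p s' (d s') (some j) * Real.exp (-β * r s' (d s') (some j)) * (-uinf j)
              = -∑ j, p s' (d s') (some j) * Real.exp (-β * r s' (d s') (some j)) * uinf j := by
            rw [← Finset.sum_neg_distrib]
            exact Finset.sum_congr rfl fun j _ => by ring
          rw [this]
          linarith
        have hb0 : bvec p r β (d s') s' = 0 := by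
          have hs1 : 0 ≤ bvec p r β (d s') s' := bvec_nonneg p r β hp_nonneg _ _
          have hs2 : 0 ≤ ∑ j, p s' (d s') (some j) * Real.exp (-β * r s' (d s') (some j)) *
              (-uinf j) :=
            Finset.sum_nonneg fun j _ => mul_nonneg
              (mul_nonneg (hp_nonneg _ _ _) (Real.exp_pos _).le) (by linarith [hule0 j])
          linarith
        have := mul_eq_zero.mp hb0
        rcases this with h' | h'
        · exact h'
        · exact absurd h' (Real.exp_ne_zero _)
      · -- hclosed
        intro s' hs' j hj
        have hkey : bvec p r β (d s') s' +
            ∑ j, p s' (d s') (some j) * Real.exp (-β * r s' (d s') (some j)) * (-uinf j) = 0 := by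
          have h1 := hfix_d s'
          rw [show uinf s' = 0 from hs', hmv] at h1
          have : ∑ j, p s' (d s') (some j) * Real.exp (-β * r s' (d s') (some j)) * (-uinf j)
              = -∑ j, p s' (d s') (some j) * Real.exp (-β * r s' (d s') (some j)) * uinf j := by
            rw [← Finset.sum_neg_distrib]
            exact Finset.sum_congr rfl fun j _ => by ring
          rw [this]
          linarith
        have hsum0 : ∑ j, p s' (d s') (some j) * Real.exp (-β * r s' (d s') (some j)) *
            (-uinf j) = 0 := by
          have hs1 : 0 ≤ bvec p r β (d s') s' := bvec_nonneg p r β hp_nonneg _ _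
          have hs2 : 0 ≤ ∑ j, p s' (d s') (some j) * Real.exp (-β * r s' (d s') (some j)) *
              (-uinf j) :=
            Finset.sum_nonneg fun j _ => mul_nonneg
              (mul_nonneg (hp_nonneg _ _ _) (Real.exp_pos _).le) (by linarith [hule0 j])
          linarith
        have hterm : p s' (d s') (some j) * Real.exp (-β * r s' (d s') (some j)) * (-uinf j)
            = 0 := by
          have := (Finset.sum_eq_zero_iff_of_nonneg (fun j _ => mul_nonneg
            (mul_nonneg (hp_nonneg _ _ _) (Real.exp_pos _).le)
            (by linarith [hule0 j] : (0:ℝ) ≤ -uinf j))).mp hsum0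
          exact this j (Finset.mem_univ j)
        have hjne : -uinf j ≠ 0 := by
          intro hc
          exact hj (show uinf j = 0 by linarith)
        rcases mul_eq_zero.mp hterm with h' | h'
        · rcases mul_eq_zero.mp h' with h'' | h''
          · exact h''
          · exact absurd h'' (Real.exp_ne_zero _)
        · exact absurd h' hjne
  -- Step 2 : uinf = winf
  have hueqw : uinf = winf := by
    by_contra hne
    -- get a state where they differ
    have hex : ∃ s, winf s < uinf s := by
      by_contra hc
      push_neg at hc
      exact hne (funext fun s => le_antisymm (hc s) (hwleu s))
    obtain ⟨s1, hs1⟩ := hex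
    set δ : S → ℝ := fun s => uinf s - winf s with hδdef
    have hδ0 : ∀ s, 0 ≤ δ s := fun s => by simp [hδdef, hwleu s]
    set α : ℝ := Finset.univ.sup' Finset.univ_nonempty (fun s => δ s / (-uinf s)) with hαdef
    have hαge : ∀ s, δ s / (-uinf s) ≤ α :=
      fun s => Finset.le_sup' (fun s => δ s / (-uinf s)) (Finset.mem_univ s)
    have hαpos : 0 < α := by
      refine lt_of_lt_of_le ?_ (hαge s1)
      apply div_pos (by simp [hδdef]; linarith) (by linarith [hneg s1])
    have hδle : ∀ s, δ s ≤ α * (-uinf s) := by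
      intro s
      have h1 : δ s = δ s / (-uinf s) * (-uinf s) :=
        (div_mul_cancel₀ _ (by linarith [hneg s] : -uinf s ≠ 0)).symm
      rw [h1]
      exact mul_le_mul_of_nonneg_right (hαge s) (by linarith [hneg s])
    -- δ ≤ B^d δ
    have hδsub : ∀ s, δ s ≤ (Bmat p r β (d s) *ᵥ δ) s := by
      intro s
      have h1 : winf s ≥ (Bmat p r β (d s) *ᵥ winf) s - bvec p r β (d s) s := by
        conv_lhs => rw [← hfixw]
        exact Lstar_le_action p r β winf (d s) s
      have h2 := hfix_d s
      have h3 : (Bmat p r β (d s) *ᵥ uinf) s - (Bmat p r β (d s) *ᵥ winf) s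
          = (Bmat p r β (d s) *ᵥ δ) s := by
        rw [hmv, hmv, hmv, ← Finset.sum_sub_distrib]
        exact Finset.sum_congr rfl fun j _ => by simp [hδdef]; ring
      simp only [hδdef]
      linarith
    -- the argmax set
    set Z : Set S := {s | α * (-uinf s) ≤ δ s} with hZdef
    have hZne : Z.Nonempty := by
      obtain ⟨s2, _, hs2⟩ := Finset.exists_mem_eq_sup' (Finset.univ_nonempty (α := S))
        (fun s => δ s / (-uinf s))
      refine ⟨s2, ?_⟩
      have : α = δ s2 / (-uinf s2) := hs2
      simp only [hZdef, Set.mem_setOf_eq, this]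
      rw [div_mul_cancel₀ _ (by linarith [hneg s2] : -uinf s2 ≠ 0)]
    -- key chain for s ∈ Z
    have hchain : ∀ s ∈ Z, bvec p r β (d s) s = 0 ∧
        ∑ j, p s (d s) (some j) * Real.exp (-β * r s (d s) (some j)) *
          (α * (-uinf j) - δ j) = 0 := by
      intro s hs
      have hBδ : (Bmat p r β (d s) *ᵥ δ) s ≤
          ∑ j, p s (d s) (some j) * Real.exp (-β * r s (d s) (some j)) * (α * (-uinf j)) := by
        rw [hmv]
        exact Finset.sum_le_sum fun j _ => mul_le_mul_of_nonneg_left (hδle j)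
          (mul_nonneg (hp_nonneg _ _ _) (Real.exp_pos _).le)
      have hBup : ∑ j, p s (d s) (some j) * Real.exp (-β * r s (d s) (some j)) * (α * (-uinf j))
          = α * ((-uinf s) - bvec p r β (d s) s) := by
        have h2 := hfix_d s
        rw [hmv] at h2
        have : ∑ j, p s (d s) (some j) * Real.exp (-β * r s (d s) (some j)) * (α * (-uinf j))
            = α * (-(∑ j, p s (d s) (some j) * Real.exp (-β * r s (d s) (some j)) * uinf j)) := by
          calc ∑ j, p s (d s) (some j) * Real.exp (-β * r s (d s) (some j)) * (α * (-uinf j))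
              = ∑ j, α * (-(p s (d s) (some j) * Real.exp (-β * r s (d s) (some j)) * uinf j)) :=
            Finset.sum_congr rfl fun j _ => by ring
          _ = α * ∑ j, -(p s (d s) (some j) * Real.exp (-β * r s (d s) (some j)) * uinf j) :=
            (Finset.mul_sum _ _ _).symm
          _ = _ := by rw [Finset.sum_neg_distrib]
        rw [this]
        have h4 : ∑ j, p s (d s) (some j) * Real.exp (-β * r s (d s) (some j)) * uinf j
            = uinf s + bvec p r β (d s) s := by linarith
        rw [h4]; ring
      have hmem : α * (-uinf s) ≤ δ s := hs
      have hb0 : bvec p r β (d s) s = 0 := by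
        have hc : α * (-uinf s) ≤ α * ((-uinf s) - bvec p r β (d s) s) := by
          calc α * (-uinf s) ≤ δ s := hmem
          _ ≤ (Bmat p r β (d s) *ᵥ δ) s := hδsub s
          _ ≤ _ := le_of_le_of_eq hBδ hBup
        have hbnn : 0 ≤ bvec p r β (d s) s := bvec_nonneg p r β hp_nonneg _ _
        nlinarith
      refine ⟨hb0, ?_⟩
      have hsum_ge : ∑ j, p s (d s) (some j) * Real.exp (-β * r s (d s) (some j)) *
          (α * (-uinf j)) ≤ ∑ j, p s (d s) (some j) * Real.exp (-β * r s (d s) (some j)) *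
          δ j := by
        have hc : α * (-uinf s) ≤ (Bmat p r β (d s) *ᵥ δ) s := le_trans hmem (hδsub s)
        rw [hmv] at hc
        calc ∑ j, p s (d s) (some j) * Real.exp (-β * r s (d s) (some j)) * (α * (-uinf j))
            = α * ((-uinf s) - bvec p r β (d s) s) := hBup
          _ = α * (-uinf s) := by rw [hb0, sub_zero]
          _ ≤ _ := hc
      have : ∑ j, p s (d s) (some j) * Real.exp (-β * r s (d s) (some j)) *
          (α * (-uinf j) - δ j) ≤ 0 := by
        calc ∑ j, p s (d s) (some j) * Real.exp (-β * r s (d s) (some j)) *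
              (α * (-uinf j) - δ j)
              = ∑ j, (p s (d s) (some j) * Real.exp (-β * r s (d s) (some j)) * (α * (-uinf j))
                - p s (d s) (some j) * Real.exp (-β * r s (d s) (some j)) * δ j) :=
            Finset.sum_congr rfl fun j _ => by ring
          _ ≤ 0 := by
            rw [Finset.sum_sub_distrib]
            linarith [hsum_ge]
      have hnn : 0 ≤ ∑ j, p s (d s) (some j) * Real.exp (-β * r s (d s) (some j)) *
          (α * (-uinf j) - δ j) :=
        Finset.sum_nonneg fun j _ => mul_nonneg
          (mul_nonneg (hp_nonneg _ _ _) (Real.exp_pos _).le) (by linarith [hδle j])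
      linarith
    -- apply closed_contra
    apply closed_contra p hp_nonneg hp_sum d (htransient d) Z hZne
    · intro s hs
      obtain ⟨hb0, _⟩ := hchain s hs
      rcases mul_eq_zero.mp hb0 with h' | h'
      · exact h'
      · exact absurd h' (Real.exp_ne_zero _)
    · intro s hs j hj
      obtain ⟨_, hsum0⟩ := hchain s hs
      have hterm := (Finset.sum_eq_zero_iff_of_nonneg (fun j _ => mul_nonneg
        (mul_nonneg (hp_nonneg _ _ _) (Real.exp_pos _).le)
        (by linarith [hδle j] : (0:ℝ) ≤ α * (-uinf j) - δ j))).mp hsum0 j (Finset.mem_univ j)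
      have hjpos : 0 < α * (-uinf j) - δ j := by
        have : ¬ (α * (-uinf j) ≤ δ j) := hj
        push_neg at this
        linarith
      rcases mul_eq_zero.mp hterm with h' | h'
      · rcases mul_eq_zero.mp h' with h'' | h''
        · exact h''
        · exact absurd h'' (Real.exp_ne_zero _)
      · linarith
  rw [← hueqw]
  exact hulim'
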